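/- Let d ≥ 1, δ > 0, let μ be a finite nonnegative Borel measure on [0,δ], let K ≥ 0 and let b : ℝ^d × ℝ^d → ℝ^d satisfy ‖b(x,y) − b(x̃,ỹ)‖ ≤ K(‖x−x̃‖ + ‖y−ỹ‖) for all x, x̃, y, ỹ ∈ ℝ^d. Let φ, φ̃ : [−δ,0] → ℝ^d be continuous, and let x, x̃ : [−δ,1] → ℝ^d be continuous with x(t) = φ(t) and x̃(t) = φ̃(t) on [−δ,0], and x(t) = φ(0) + ∫₀^t b(x(s), ∫₀^δ x(s−u) μ(du)) ds, x̃(t) = φ̃(0) + ∫₀^t b(x̃(s), ∫₀^δ x̃(s−u) μ(du)) ds for all t ∈ [0,1]. Then sup_{t∈[−δ,1]} ‖x(t) − x̃(t)‖ ≤ exp(K(1 + μ([0,δ]))) · sup_{t∈[−δ,0]} ‖φ(t) − φ̃(t)‖. -/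

import Mathlib

open MeasureTheory Set

/-- Continuous dependence on the initial path for the delay ordinary differential
equation with Lipschitz drift: the sup-distance of the two solutions on `[-δ,1]` is
controlled by `exp(K(1 + μ([0,δ])))` times the sup-distance of the initial paths. -/
theorem delay_ode_continuous_dependence
    (d : ℕ) (hd : 1 ≤ d) (δ : ℝ) (hδ : 0 < δ)
    (μ : Measure ℝ) [IsFiniteMeasure μ]
    (K : ℝ) (hK : 0 ≤ K)
    (b : EuclideanSpace ℝ (Fin d) → EuclideanSpace ℝ (Fin d) → EuclideanSpace ℝ (Fin d))
    (hb : ∀ x x' y y' : EuclideanSpace ℝ (Fin d),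
      ‖b x y - b x' y'‖ ≤ K * (‖x - x'‖ + ‖y - y'‖))
    (φ φ' : ℝ → EuclideanSpace ℝ (Fin d))
    (hφ : ContinuousOn φ (Icc (-δ) 0)) (hφ' : ContinuousOn φ' (Icc (-δ) 0))
    (x x' : ℝ → EuclideanSpace ℝ (Fin d))
    (hxc : ContinuousOn x (Icc (-δ) 1)) (hx'c : ContinuousOn x' (Icc (-δ) 1))
    (hxinit : ∀ t ∈ Icc (-δ) (0:ℝ), x t = φ t)
    (hx'init : ∀ t ∈ Icc (-δ) (0:ℝ), x' t = φ' t)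
    (hxeq : ∀ t ∈ Icc (0:ℝ) 1,
      x t = φ 0 + ∫ s in (0:ℝ)..t, b (x s) (∫ u in Icc (0:ℝ) δ, x (s - u) ∂μ))
    (hx'eq : ∀ t ∈ Icc (0:ℝ) 1,
      x' t = φ' 0 + ∫ s in (0:ℝ)..t, b (x' s) (∫ u in Icc (0:ℝ) δ, x' (s - u) ∂μ)) :
    ∀ t ∈ Icc (-δ) (1:ℝ),
      ‖x t - x' t‖ ≤ Real.exp (K * (1 + (μ (Icc (0:ℝ) δ)).toReal))
        * sSup ((fun s => ‖φ s - φ' s‖) '' Icc (-δ) (0:ℝ)) := by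
  have hδ0 : (-δ : ℝ) ≤ 0 := by linarith
  have hδ1 : (-δ : ℝ) ≤ 1 := by linarith
  set m : ℝ := (μ (Icc (0:ℝ) δ)).toReal with hm
  have hm0 : 0 ≤ m := ENNReal.toReal_nonneg
  set C : ℝ := K * (1 + m) with hCdef
  have hC0 : 0 ≤ C := mul_nonneg hK (by linarith)
  set f : ℝ → ℝ := fun s => ‖x s - x' s‖ with hfdef
  have hfc : ContinuousOn f (Icc (-δ) 1) := (hxc.sub hx'c).norm
  have hf0 : ∀ s, 0 ≤ f s := fun s => norm_nonneg _
  have hbdd1 : BddAbove (f '' Icc (-δ) 1) :=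
    (isCompact_Icc.image_of_continuousOn hfc).bddAbove
  set g : ℝ → ℝ := fun t => sSup (f '' Icc (-δ) (min t 1)) with hgdef
  have hbddg : ∀ t, BddAbove (f '' Icc (-δ) (min t 1)) := fun t =>
    hbdd1.mono (image_mono (Icc_subset_Icc le_rfl (min_le_right _ _)))
  have hfg : ∀ s t : ℝ, -δ ≤ s → s ≤ t → s ≤ 1 → f s ≤ g t := by
    intro s t h1 h2 h3
    exact le_csSup (hbddg t) ⟨s, ⟨h1, le_min h2 h3⟩, rfl⟩
  have hg0 : ∀ t, -δ ≤ t → 0 ≤ g t := by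
    intro t ht
    exact (hf0 (-δ)).trans (hfg (-δ) t le_rfl ht hδ1)
  have hgmono : Monotone g := by
    intro s t hst
    rcases le_or_gt (-δ) s with h | h
    · refine csSup_le_csSup (hbddg t) ?_
        (image_mono (Icc_subset_Icc le_rfl (min_le_min hst le_rfl)))
      exact (nonempty_Icc.2 (le_min h hδ1)).image f
    · have hemp : Icc (-δ) (min s 1) = ∅ := Icc_eq_empty (by
        intro hc
        exact absurd (hc.trans (min_le_left _ _)) (not_le.2 h))
      have hgs : g s = 0 := by simp only [hgdef, hemp, image_empty, Real.sSup_empty]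
      rw [hgs]
      rcases le_or_gt (-δ) t with h2 | h2
      · exact hg0 t h2
      · have hemp2 : Icc (-δ) (min t 1) = ∅ := Icc_eq_empty (by
          intro hc
          exact absurd (hc.trans (min_le_left _ _)) (not_le.2 h2))
        simp only [hgdef, hemp2, image_empty, Real.sSup_empty, le_refl]
  have hgint : ∀ a b : ℝ, IntervalIntegrable g volume a b := fun a b =>
    hgmono.intervalIntegrable
  have hCgint : ∀ a b : ℝ, IntervalIntegrable (fun s => C * g s) volume a b := fun a b =>
    (hgint a b).const_mul C
  have hφbdd : BddAbove ((fun s => ‖φ s - φ' s‖) '' Icc (-δ) (0:ℝ)) :=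
    (isCompact_Icc.image_of_continuousOn ((hφ.sub hφ').norm)).bddAbove
  set A : ℝ := sSup ((fun s => ‖φ s - φ' s‖) '' Icc (-δ) (0:ℝ)) with hAdef
  have hfA : ∀ s ∈ Icc (-δ) (0:ℝ), f s ≤ A := by
    intro s hs
    have h1 : f s = ‖φ s - φ' s‖ := by
      simp only [hfdef, hxinit s hs, hx'init s hs]
    rw [h1]
    exact le_csSup hφbdd ⟨s, hs, rfl⟩
  have hA0 : 0 ≤ A :=
    (norm_nonneg (φ (-δ) - φ' (-δ))).trans (le_csSup hφbdd ⟨-δ, ⟨le_rfl, hδ0⟩, rfl⟩)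
  -- integrability of delayed integrands
  have hxint : ∀ s ∈ Icc (0:ℝ) 1, IntegrableOn (fun u => x (s - u)) (Icc 0 δ) μ := by
    intro s hs
    apply ContinuousOn.integrableOn_compact isCompact_Icc
    apply hxc.comp (continuous_const.sub continuous_id).continuousOn
    intro u hu
    simp only [mem_Icc, id_eq, Pi.sub_apply] at hu ⊢
    constructor <;> [linarith [hs.1, hu.2]; linarith [hs.2, hu.1]]
  have hx'int : ∀ s ∈ Icc (0:ℝ) 1, IntegrableOn (fun u => x' (s - u)) (Icc 0 δ) μ := by
    intro s hs
    apply ContinuousOn.integrableOn_compact isCompact_Icc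
    apply hx'c.comp (continuous_const.sub continuous_id).continuousOn
    intro u hu
    simp only [mem_Icc, id_eq, Pi.sub_apply] at hu ⊢
    constructor <;> [linarith [hs.1, hu.2]; linarith [hs.2, hu.1]]
  -- delay term estimate
  have hHsub : ∀ s ∈ Icc (0:ℝ) 1,
      ‖(∫ u in Icc (0:ℝ) δ, x (s - u) ∂μ) - ∫ u in Icc (0:ℝ) δ, x' (s - u) ∂μ‖ ≤ m * g s := by
    intro s hs
    rw [← integral_sub (hxint s hs) (hx'int s hs)]
    have := norm_setIntegral_le_of_norm_le_const (μ := μ) (s := Icc (0:ℝ) δ) (C := g s)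
      (f := (fun u => x (s - u)) - fun u => x' (s - u))
      (measure_lt_top μ _) ?_
    · rw [measureReal_def, ← hm] at this
      simp only [Pi.sub_apply] at this
      linarith [this]
    · intro u hu
      simp only [Pi.sub_apply]
      have h1 : f (s - u) ≤ g s := hfg (s - u) s (by linarith [hs.1, hu.2])
        (by linarith [hu.1]) (by linarith [hs.2, hu.1])
      simpa only [hfdef] using h1
  -- continuity of delay terms
  have hHcgen : ∀ (z : ℝ → EuclideanSpace ℝ (Fin d)), ContinuousOn z (Icc (-δ) 1) →
      (∀ s ∈ Icc (0:ℝ) 1, IntegrableOn (fun u => z (s - u)) (Icc 0 δ) μ) →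
      ContinuousOn (fun s => ∫ u in Icc (0:ℝ) δ, z (s - u) ∂μ) (Icc (0:ℝ) 1) := by
    intro z hzc hzint
    have hux : UniformContinuousOn z (Icc (-δ) 1) :=
      isCompact_Icc.uniformContinuousOn_of_continuous hzc
    rw [Metric.uniformContinuousOn_iff] at hux
    rw [Metric.continuousOn_iff]
    intro s hs ε hε
    obtain ⟨η, hη, hux⟩ := hux (ε / (2 * (m + 1))) (by positivity)
    refine ⟨η, hη, fun s' hs' hss' => ?_⟩
    have key : ‖(∫ u in Icc (0:ℝ) δ, z (s' - u) ∂μ) - ∫ u in Icc (0:ℝ) δ, z (s - u) ∂μ‖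
        ≤ (ε / (2 * (m + 1))) * m := by
      rw [← integral_sub (hzint s' hs') (hzint s hs)]
      have := norm_setIntegral_le_of_norm_le_const (μ := μ) (s := Icc (0:ℝ) δ)
        (C := ε / (2 * (m + 1))) (f := (fun u => z (s' - u)) - fun u => z (s - u))
        (measure_lt_top μ _) ?_
      · rw [measureReal_def, ← hm] at this
        simpa only [Pi.sub_apply] using this
      · intro u hu
        simp only [Pi.sub_apply]
        have h1 : s' - u ∈ Icc (-δ) 1 := by
          simp only [mem_Icc, id_eq] at hu ⊢
          constructor <;> [linarith [hs'.1, hu.2]; linarith [hs'.2, hu.1]]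
        have h2 : s - u ∈ Icc (-δ) 1 := by
          simp only [mem_Icc, id_eq] at hu ⊢
          constructor <;> [linarith [hs.1, hu.2]; linarith [hs.2, hu.1]]
        have hd : dist (s' - u) (s - u) < η := by
          rw [Real.dist_eq]
          simpa [Real.dist_eq, sub_sub_sub_cancel_right] using hss'
        have := hux _ h1 _ h2 hd
        rw [dist_eq_norm] at this
        exact this.le
    rw [dist_eq_norm]
    have hlt : ε / (2 * (m + 1)) * m < ε := by
      have hp : (0:ℝ) < 2 * (m + 1) := by positivity
      rw [div_mul_eq_mul_div, div_lt_iff₀ hp]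
      nlinarith
    exact lt_of_le_of_lt key hlt
  have hHc := hHcgen x hxc hxint
  have hH'c := hHcgen x' hx'c hx'int
  -- continuity of b
  have hbc : Continuous fun p : EuclideanSpace ℝ (Fin d) × EuclideanSpace ℝ (Fin d) =>
      b p.1 p.2 := by
    apply LipschitzWith.continuous (K := Real.toNNReal (2 * K))
    apply LipschitzWith.of_dist_le_mul
    intro p q
    rw [dist_eq_norm]
    have h1 : dist p.1 q.1 ≤ dist p q := by rw [Prod.dist_eq]; exact le_max_left _ _
    have h2 : dist p.2 q.2 ≤ dist p q := by rw [Prod.dist_eq]; exact le_max_right _ _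
    rw [dist_eq_norm] at h1 h2
    calc ‖b p.1 p.2 - b q.1 q.2‖ ≤ K * (‖p.1 - q.1‖ + ‖p.2 - q.2‖) := hb _ _ _ _
      _ ≤ K * (dist p q + dist p q) :=
        mul_le_mul_of_nonneg_left (add_le_add h1 h2) hK
      _ = 2 * K * dist p q := by ring
      _ = (Real.toNNReal (2 * K) : ℝ) * dist p q := by
        rw [Real.coe_toNNReal _ (by positivity)]
  -- continuity of the drift terms
  have hBc : ContinuousOn (fun s => b (x s) (∫ u in Icc (0:ℝ) δ, x (s - u) ∂μ))
      (Icc (0:ℝ) 1) :=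
    hbc.comp_continuousOn ((hxc.mono (Icc_subset_Icc hδ0 le_rfl)).prodMk hHc)
  have hB'c : ContinuousOn (fun s => b (x' s) (∫ u in Icc (0:ℝ) δ, x' (s - u) ∂μ))
      (Icc (0:ℝ) 1) :=
    hbc.comp_continuousOn ((hx'c.mono (Icc_subset_Icc hδ0 le_rfl)).prodMk hH'c)
  have hsubI : ∀ r ∈ Icc (0:ℝ) 1, uIcc (0:ℝ) r ⊆ Icc (0:ℝ) 1 := by
    intro r hr
    rw [uIcc_of_le hr.1]
    exact Icc_subset_Icc le_rfl hr.2
  have hBint : ∀ r ∈ Icc (0:ℝ) 1, IntervalIntegrable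
      (fun s => b (x s) (∫ u in Icc (0:ℝ) δ, x (s - u) ∂μ)) volume 0 r := fun r hr =>
    (hBc.mono (hsubI r hr)).intervalIntegrable
  have hB'int : ∀ r ∈ Icc (0:ℝ) 1, IntervalIntegrable
      (fun s => b (x' s) (∫ u in Icc (0:ℝ) δ, x' (s - u) ∂μ)) volume 0 r := fun r hr =>
    (hB'c.mono (hsubI r hr)).intervalIntegrable
  -- the key integral inequality
  have hkey : ∀ t ∈ Icc (0:ℝ) 1, g t ≤ A + ∫ s in (0:ℝ)..t, C * g s := by
    intro t ht
    have hintpos : 0 ≤ ∫ s in (0:ℝ)..t, C * g s :=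
      intervalIntegral.integral_nonneg ht.1
        (fun u hu => mul_nonneg hC0 (hg0 u (by linarith [hu.1])))
    have hmin : min t 1 = t := min_eq_left ht.2
    simp only [hgdef, hmin]
    apply csSup_le ((nonempty_Icc.2 (by linarith [ht.1] : (-δ:ℝ) ≤ t)).image f)
    rintro y ⟨r, hr, rfl⟩
    rcases le_or_gt r 0 with h0 | h0
    · exact (hfA r ⟨hr.1, h0⟩).trans (le_add_of_nonneg_right hintpos)
    · have hr01 : r ∈ Icc (0:ℝ) 1 := ⟨h0.le, hr.2.trans ht.2⟩
      have hsub : x r - x' r = (φ 0 - φ' 0) +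
          ∫ s in (0:ℝ)..r, (b (x s) (∫ u in Icc (0:ℝ) δ, x (s - u) ∂μ)
            - b (x' s) (∫ u in Icc (0:ℝ) δ, x' (s - u) ∂μ)) := by
        rw [hxeq r hr01, hx'eq r hr01,
          intervalIntegral.integral_sub (hBint r hr01) (hB'int r hr01)]
        abel
      have hφ0 : ‖φ 0 - φ' 0‖ ≤ A := le_csSup hφbdd ⟨0, ⟨hδ0, le_rfl⟩, rfl⟩
      have hptwise : ∀ s ∈ Icc (0:ℝ) r,
          ‖b (x s) (∫ u in Icc (0:ℝ) δ, x (s - u) ∂μ)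
            - b (x' s) (∫ u in Icc (0:ℝ) δ, x' (s - u) ∂μ)‖ ≤ C * g s := by
        intro s hs
        have hs01 : s ∈ Icc (0:ℝ) 1 := ⟨hs.1, hs.2.trans hr01.2⟩
        have h1 : ‖x s - x' s‖ ≤ g s := by
          simpa only [hfdef] using hfg s s (by linarith [hs.1]) le_rfl hs01.2
        have h2 := hHsub s hs01
        calc ‖b (x s) (∫ u in Icc (0:ℝ) δ, x (s - u) ∂μ)
              - b (x' s) (∫ u in Icc (0:ℝ) δ, x' (s - u) ∂μ)‖
            ≤ K * (‖x s - x' s‖ +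
              ‖(∫ u in Icc (0:ℝ) δ, x (s - u) ∂μ) - ∫ u in Icc (0:ℝ) δ, x' (s - u) ∂μ‖) :=
              hb _ _ _ _
          _ ≤ K * (g s + m * g s) :=
              mul_le_mul_of_nonneg_left (add_le_add h1 h2) hK
          _ = C * g s := by rw [hCdef]; ring
      have hnormc : ContinuousOn (fun s =>
          ‖b (x s) (∫ u in Icc (0:ℝ) δ, x (s - u) ∂μ)
            - b (x' s) (∫ u in Icc (0:ℝ) δ, x' (s - u) ∂μ)‖) (Icc (0:ℝ) 1) :=
        (hBc.sub hB'c).norm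
      have hintmono : (∫ s in (0:ℝ)..r,
          ‖b (x s) (∫ u in Icc (0:ℝ) δ, x (s - u) ∂μ)
            - b (x' s) (∫ u in Icc (0:ℝ) δ, x' (s - u) ∂μ)‖)
          ≤ ∫ s in (0:ℝ)..r, C * g s :=
        intervalIntegral.integral_mono_on h0.le
          ((hnormc.mono (hsubI r hr01)).intervalIntegrable) (hCgint 0 r) hptwise
      have hintmono2 : (∫ s in (0:ℝ)..r, C * g s) ≤ ∫ s in (0:ℝ)..t, C * g s := by
        apply intervalIntegral.integral_mono_interval le_rfl h0.le hr.2 _ (hCgint 0 t)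
        filter_upwards [ae_restrict_mem measurableSet_Ioc] with u hu
        exact mul_nonneg hC0 (hg0 u (by linarith [hu.1]))
      have hfr : f r ≤ ‖φ 0 - φ' 0‖ + ∫ s in (0:ℝ)..r,
          ‖b (x s) (∫ u in Icc (0:ℝ) δ, x (s - u) ∂μ)
            - b (x' s) (∫ u in Icc (0:ℝ) δ, x' (s - u) ∂μ)‖ := by
        simp only [hfdef]
        rw [hsub]
        exact (norm_add_le _ _).trans
          (add_le_add_right (intervalIntegral.norm_integral_le_integral_norm h0.le) _)
      calc f r ≤ _ := hfr
        _ ≤ A + ∫ s in (0:ℝ)..t, C * g s := add_le_add hφ0 (hintmono.trans hintmono2)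
  -- Gronwall setup
  set G : ℝ → ℝ := fun t => A + ∫ s in (0:ℝ)..t, C * g s with hGdef
  have hGc : Continuous G := by
    rw [hGdef]
    exact continuous_const.add (intervalIntegral.continuous_primitive hCgint 0)
  have hgG : ∀ t ∈ Icc (0:ℝ) 1, g t ≤ G t := fun t ht => hkey t ht
  have hG0 : ∀ t, 0 ≤ t → 0 ≤ G t := by
    intro t ht
    have : 0 ≤ ∫ s in (0:ℝ)..t, C * g s :=
      intervalIntegral.integral_nonneg ht
        (fun u hu => mul_nonneg hC0 (hg0 u (by linarith [hu.1])))
    simp only [hGdef]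
    linarith
  have hCGc : Continuous (fun s => C * G s) := continuous_const.mul hGc
  set F : ℝ → ℝ := fun t => ∫ s in (0:ℝ)..t, C * G s with hFdef
  have hF' : ∀ t : ℝ, HasDerivAt F (C * G t) t := by
    intro t
    have := (hCGc.integral_hasStrictDerivAt 0 t).hasDerivAt
    rwa [← hFdef] at this
  have hFc : Continuous F := by
    rw [hFdef]
    exact intervalIntegral.continuous_primitive
      (fun a b => hCGc.intervalIntegrable a b) 0
  have hF0 : ∀ t, 0 ≤ t → 0 ≤ F t := by
    intro t ht
    simp only [hFdef]
    exact intervalIntegral.integral_nonneg ht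
      (fun u hu => mul_nonneg hC0 (hG0 u hu.1))
  have hGF : ∀ t ∈ Icc (0:ℝ) 1, G t ≤ A + F t := by
    intro t ht
    simp only [hGdef, hFdef]
    refine add_le_add_right ?_ A
    apply intervalIntegral.integral_mono_on ht.1 (hCgint 0 t)
      (hCGc.intervalIntegrable 0 t)
    intro s hs
    exact mul_le_mul_of_nonneg_left (hgG s ⟨hs.1, hs.2.trans ht.2⟩) hC0
  have hgron := norm_le_gronwallBound_of_norm_deriv_right_le (f := F)
    (f' := fun t => C * G t) (δ := 0) (K := C) (ε := C * A) (a := 0) (b := 1)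
    hFc.continuousOn (fun t _ => (hF' t).hasDerivWithinAt)
    (by simp [hFdef])
    (fun t ht => by
      rw [Real.norm_eq_abs, abs_of_nonneg (mul_nonneg hC0 (hG0 t ht.1)),
        Real.norm_eq_abs, abs_of_nonneg (hF0 t ht.1)]
      have h1 := hGF t ⟨ht.1, ht.2.le⟩
      nlinarith [hC0])
  -- final bound on [0,1]
  have hfinal : ∀ t ∈ Icc (0:ℝ) 1, f t ≤ Real.exp C * A := by
    intro t ht
    have h1 : f t ≤ G t := (hfg t t (by linarith [ht.1]) le_rfl ht.2).trans (hgG t ht)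
    have h2 := hGF t ht
    have h3 := hgron t ht
    rw [Real.norm_eq_abs, abs_of_nonneg (hF0 t ht.1), sub_zero] at h3
    rcases eq_or_ne C 0 with hC | hC
    · have hb0 : gronwallBound 0 C (C * A) t = 0 := by
        rw [hC]; simp [gronwallBound]
      have hexp : (1:ℝ) ≤ Real.exp C := Real.one_le_exp hC0
      nlinarith [h1, h2, h3, hb0, hA0]
    · have hb0 : gronwallBound 0 C (C * A) t = A * (Real.exp (C * t) - 1) := by
        rw [gronwallBound_of_K_ne_0 hC]
        field_simp
        ring
      rw [hb0] at h3
      have hexp : Real.exp (C * t) ≤ Real.exp C :=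
        Real.exp_le_exp.2 (by nlinarith [ht.2, hC0])
      have hexp1 : (1:ℝ) ≤ Real.exp (C * t) :=
        Real.one_le_exp (mul_nonneg hC0 ht.1)
      nlinarith [h1, h2, h3, hA0, hexp, hexp1]
  -- conclusion
  intro t ht
  have hfin : f t ≤ Real.exp C * A := by
    rcases le_or_gt t 0 with h | h
    · exact (hfA t ⟨ht.1, h⟩).trans (le_mul_of_one_le_left hA0 (Real.one_le_exp hC0))
    · exact hfinal t ⟨h.le, ht.2⟩
  simpa only [hfdef] using hfin
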